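/- Let α ≥ 0 and 1 < p < q < ∞. Then X^p_α ⊆ X^q_α, with ‖g‖_{X^q_α}^q ≤ C ‖g‖_{X^p_α}^p·‖g‖_{X^p_α}^{q-p} type control; in particular every g ∈ X^p_α satisfies sup_{a∈𝔻} (1-|a|²)^{2+α} ∫_𝔻 |g'(z)|² dA_α(z)/|1-conj(a)z|^{2+2α} ≤ C ‖g‖_{X^p_α}². -/

import Mathlib

open MeasureTheory Metric Complex ENNReal

/-- The open unit disk in `ℂ`. -/
def unitDisk : Set ℂ := Metric.ball (0 : ℂ) 1

/-- Normalized area measure `dA = (1/π) dx dy` on `ℂ`. -/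
noncomputable def mA : Measure ℂ := (ENNReal.ofReal Real.pi)⁻¹ • volume

/-- The `p`-th power of the `X^p_α` norm:
`‖g‖_{X^p_α}^p = |g(0)|^p + ∫_𝔻 ((1-|w|²)^α ∫_𝔻 |g'(z)|² dA_α(z)/|1-conj(w)z|^{2+2α})^{p/2}
(1-|w|²)^{p-2} dA(w)`, valued in `[0,∞]`. -/
noncomputable def XnormE (p α : ℝ) (g : ℂ → ℂ) : ℝ≥0∞ :=
  ENNReal.ofReal (‖g 0‖ ^ p) +
    ∫⁻ w in unitDisk,
      (ENNReal.ofReal ((1 - ‖w‖ ^ 2) ^ α) *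
        ∫⁻ z in unitDisk,
          ENNReal.ofReal (‖deriv g z‖ ^ 2 * ((α + 1) * (1 - ‖z‖ ^ 2) ^ α) /
            ‖1 - (starRingEnd ℂ) w * z‖ ^ (2 + 2 * α)) ∂mA) ^ (p / 2) *
      ENNReal.ofReal ((1 - ‖w‖ ^ 2) ^ (p - 2)) ∂mA



noncomputable def Iop (α : ℝ) (g : ℂ → ℂ) (w : ℂ) : ℝ≥0∞ :=
  ∫⁻ z in unitDisk,
    ENNReal.ofReal (‖deriv g z‖ ^ 2 * ((α + 1) * (1 - ‖z‖ ^ 2) ^ α) /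
      ‖1 - (starRingEnd ℂ) w * z‖ ^ (2 + 2 * α)) ∂mA

lemma mem_unitDisk {z : ℂ} : z ∈ unitDisk ↔ ‖z‖ < 1 := by
  simp [unitDisk, mem_ball_zero_iff]

lemma measurableSet_unitDisk : MeasurableSet unitDisk := measurableSet_ball

lemma rpow_min_le {m M x β : ℝ} (hm : 0 < m) (h1 : m ≤ x) (h2 : x ≤ M) :
    min (m ^ β) (M ^ β) ≤ x ^ β := by
  rcases le_or_gt 0 β with hβ | hβ
  · exact (min_le_left _ _).trans (Real.rpow_le_rpow hm.le h1 hβ)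
  · exact (min_le_right _ _).trans (Real.rpow_le_rpow_of_nonpos (hm.trans_le h1) h2 hβ.le)

lemma ball_subset_unitDisk {a : ℂ} (ha : a ∈ unitDisk) :
    Metric.ball a ((1 - ‖a‖) / 2) ⊆ unitDisk := by
  intro w hw
  rw [mem_unitDisk]
  rw [mem_unitDisk] at ha
  rw [mem_ball, dist_eq_norm] at hw
  have h1 : ‖w‖ - ‖a‖ ≤ ‖w - a‖ := by
    simpa using norm_sub_norm_le w a
  linarith

lemma sw_bounds {a w : ℂ} (ha : a ∈ unitDisk) (hw : w ∈ Metric.ball a ((1 - ‖a‖) / 2)) :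
    (1 - ‖a‖ ^ 2) / 4 ≤ 1 - ‖w‖ ^ 2 ∧ 1 - ‖w‖ ^ 2 ≤ 3 * (1 - ‖a‖ ^ 2) := by
  have hw' : ‖w‖ < 1 := mem_unitDisk.mp (ball_subset_unitDisk ha hw)
  rw [mem_unitDisk] at ha
  rw [mem_ball, dist_eq_norm] at hw
  have h1 : ‖w‖ - ‖a‖ ≤ ‖w - a‖ := by simpa using norm_sub_norm_le w a
  have h2 : ‖a‖ - ‖w‖ ≤ ‖w - a‖ := by simpa [norm_sub_rev] using norm_sub_norm_le a w
  have h3 : (0:ℝ) ≤ ‖a‖ := norm_nonneg a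
  have h4 : (0:ℝ) ≤ ‖w‖ := norm_nonneg w
  constructor <;> nlinarith

-- kernel comparison
lemma Iop_comp (α : ℝ) (hα : 0 ≤ α) (g : ℂ → ℂ) {a w : ℂ} (ha : a ∈ unitDisk)
    (hw : w ∈ Metric.ball a ((1 - ‖a‖) / 2)) :
    ENNReal.ofReal ((2/3 : ℝ) ^ (2 + 2*α)) * Iop α g a ≤ Iop α g w := by
  have hw' : ‖w‖ < 1 := mem_unitDisk.mp (ball_subset_unitDisk ha hw)
  rw [mem_unitDisk] at ha
  rw [mem_ball, dist_eq_norm] at hw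
  rw [Iop, Iop, ← lintegral_const_mul' _ _ (by exact ofReal_ne_top)]
  refine setLIntegral_mono' measurableSet_unitDisk fun z hz => ?_
  rw [mem_unitDisk] at hz
  rw [← ENNReal.ofReal_mul (by positivity)]
  refine ENNReal.ofReal_le_ofReal ?_
  set N : ℝ := ‖deriv g z‖ ^ 2 * ((α + 1) * (1 - ‖z‖ ^ 2) ^ α) with hN
  have hzsq : (0:ℝ) ≤ 1 - ‖z‖ ^ 2 := by nlinarith [norm_nonneg z]
  have hNn : 0 ≤ N := by
    have := Real.rpow_nonneg hzsq α
    positivity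
  set A : ℝ := ‖1 - (starRingEnd ℂ) w * z‖ with hA
  set B : ℝ := ‖1 - (starRingEnd ℂ) a * z‖ with hB
  have hApos : 0 < A := by
    have h1 : ‖(starRingEnd ℂ) w * z‖ < 1 := by
      rw [norm_mul, RCLike.norm_conj]
      nlinarith [norm_nonneg w, norm_nonneg z]
    have h2 : (1:ℝ) - ‖(starRingEnd ℂ) w * z‖ ≤ A := by
      simpa using norm_sub_norm_le (1 : ℂ) ((starRingEnd ℂ) w * z)
    linarith
  have hBlb : 1 - ‖a‖ ≤ B := by
    have h1 : ‖(starRingEnd ℂ) a * z‖ ≤ ‖a‖ := by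
      rw [norm_mul, RCLike.norm_conj]
      nlinarith [norm_nonneg a, norm_nonneg z]
    have h2 : (1:ℝ) - ‖(starRingEnd ℂ) a * z‖ ≤ B := by
      simpa using norm_sub_norm_le (1 : ℂ) ((starRingEnd ℂ) a * z)
    linarith
  have hBpos : 0 < B := by linarith
  have hdiff : A ≤ B + (1 - ‖a‖) / 2 := by
    have h1 : ‖(1 - (starRingEnd ℂ) w * z) - (1 - (starRingEnd ℂ) a * z)‖
        = ‖a - w‖ * ‖z‖ := by
      have : (1 - (starRingEnd ℂ) w * z) - (1 - (starRingEnd ℂ) a * z)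
          = (starRingEnd ℂ) (a - w) * z := by
        rw [map_sub]; ring
      rw [this, norm_mul, RCLike.norm_conj]
    have h2 : A - B ≤ ‖a - w‖ * ‖z‖ := by
      rw [← h1]; simpa using norm_sub_norm_le (1 - (starRingEnd ℂ) w * z) (1 - (starRingEnd ℂ) a * z)
    have h3 : ‖a - w‖ * ‖z‖ ≤ (1 - ‖a‖) / 2 := by
      have : ‖a - w‖ < (1 - ‖a‖) / 2 := by rwa [norm_sub_rev]
      nlinarith [norm_nonneg z, norm_nonneg (a - w)]
    linarith
  have hAB : A ≤ (3/2) * B := by linarith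
  have hs : (0:ℝ) ≤ 2 + 2 * α := by linarith
  have hApow : (0:ℝ) < A ^ (2 + 2*α) := Real.rpow_pos_of_pos hApos _
  have hle : A ^ (2 + 2*α) ≤ (3/2 : ℝ) ^ (2 + 2*α) * B ^ (2 + 2*α) := by
    calc A ^ (2 + 2*α) ≤ ((3/2) * B) ^ (2 + 2*α) :=
          Real.rpow_le_rpow hApos.le hAB hs
      _ = (3/2 : ℝ) ^ (2 + 2*α) * B ^ (2 + 2*α) :=
          Real.mul_rpow (by norm_num) hBpos.le
  have heq : (2/3 : ℝ) ^ (2 + 2*α) * (N / B ^ (2 + 2*α))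
      = N / ((3/2 : ℝ) ^ (2 + 2*α) * B ^ (2 + 2*α)) := by
    have h32 : (0:ℝ) < (3/2 : ℝ) ^ (2 + 2*α) := Real.rpow_pos_of_pos (by norm_num) _
    have hBp : (0:ℝ) < B ^ (2 + 2*α) := Real.rpow_pos_of_pos hBpos _
    rw [show (2/3 : ℝ) = ((3/2 : ℝ))⁻¹ by norm_num, Real.inv_rpow (by norm_num)]
    field_simp
  rw [heq]
  gcongr

noncomputable def Fp (p α : ℝ) (g : ℂ → ℂ) (w : ℂ) : ℝ≥0∞ :=
  (ENNReal.ofReal ((1 - ‖w‖ ^ 2) ^ α) * Iop α g w) ^ (p / 2) *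
    ENNReal.ofReal ((1 - ‖w‖ ^ 2) ^ (p - 2))
lemma XnormE_eq (p α : ℝ) (g : ℂ → ℂ) :
    XnormE p α g = ENNReal.ofReal (‖g 0‖ ^ p) + ∫⁻ w in unitDisk, Fp p α g w ∂mA := rfl


lemma supBound (α p : ℝ) (hα : 0 ≤ α) (hp : 1 < p) :
    ∃ C₀ : ℝ≥0∞, C₀ ≠ 0 ∧ C₀ ≠ ⊤ ∧ ∀ g : ℂ → ℂ, ∀ a ∈ unitDisk,
      ENNReal.ofReal ((1 - ‖a‖ ^ 2) ^ (2 + α)) * Iop α g a ≤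
        C₀ * (XnormE p α g) ^ (2 / p) := by
  have hp0 : p ≠ 0 := by linarith
  have hp2 : (0:ℝ) ≤ p / 2 := by linarith
  set k1 : ℝ := (2/3 : ℝ) ^ (2 + 2*α) with hk1def
  have hk1 : 0 < k1 := Real.rpow_pos_of_pos (by norm_num) _
  set k3 : ℝ := min ((1/4 : ℝ) ^ (p-2)) ((3:ℝ) ^ (p-2)) with hk3def
  have hk3 : 0 < k3 := lt_min (Real.rpow_pos_of_pos (by norm_num) _)
    (Real.rpow_pos_of_pos (by norm_num) _)
  have hq4 : (0:ℝ) < (1/4 : ℝ) ^ α := Real.rpow_pos_of_pos (by norm_num) _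
  set c₆ : ℝ≥0∞ := ENNReal.ofReal ((1/4 : ℝ) ^ α * k1) with hc6def
  have hc60 : c₆ ≠ 0 := by
    simp only [hc6def, ne_eq, ENNReal.ofReal_eq_zero, not_le]
    positivity
  set c₉ : ℝ≥0∞ := c₆ ^ (p/2) * ENNReal.ofReal k3 * ENNReal.ofReal (1/16 : ℝ) with hc9def
  have hc90 : c₉ ≠ 0 := by
    simp only [hc9def]
    refine mul_ne_zero (mul_ne_zero ?_ ?_) ?_
    · exact (ENNReal.rpow_pos (pos_iff_ne_zero.mpr hc60) ofReal_ne_top).ne'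
    · simp only [ne_eq, ENNReal.ofReal_eq_zero, not_le]; exact hk3
    · simp
  have hc9T : c₉ ≠ ⊤ := by
    simp only [hc9def]
    refine ENNReal.mul_ne_top (ENNReal.mul_ne_top ?_ ofReal_ne_top) ofReal_ne_top
    exact ENNReal.rpow_ne_top_of_nonneg hp2 ofReal_ne_top
  refine ⟨(c₉⁻¹) ^ (2/p), ?_, ?_, ?_⟩
  · exact (ENNReal.rpow_pos (pos_iff_ne_zero.mpr (ENNReal.inv_ne_zero.mpr hc9T))
      (ENNReal.inv_ne_top.mpr hc90)).ne'
  · exact ENNReal.rpow_ne_top_of_nonneg (by positivity) (ENNReal.inv_ne_top.mpr hc90)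
  intro g a ha
  have ha1 : ‖a‖ < 1 := mem_unitDisk.mp ha
  set sa : ℝ := 1 - ‖a‖ ^ 2 with hsadef
  have hsa : 0 < sa := by nlinarith [norm_nonneg a]
  set t : ℝ≥0∞ := ENNReal.ofReal sa with htdef
  have ht0 : t ≠ 0 := (ENNReal.ofReal_pos.mpr hsa).ne'
  have htT : t ≠ ⊤ := ofReal_ne_top
  set r : ℝ := (1 - ‖a‖) / 2 with hrdef
  have hr : 0 < r := by simp only [hrdef]; linarith
  set I : ℝ≥0∞ := Iop α g a with hIdef
  set E : ℝ≥0∞ := c₆ ^ (p/2) * ENNReal.ofReal k3 * ((t ^ α * I) ^ (p/2) * t ^ (p-2))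
    with hEdef
  -- pointwise bound on the ball
  have hpt : ∀ w ∈ Metric.ball a r, E ≤ Fp p α g w := by
    intro w hw
    obtain ⟨hb1, hb2⟩ := sw_bounds ha hw
    have hsw : (0:ℝ) < 1 - ‖w‖ ^ 2 := lt_of_lt_of_le (by positivity) hb1
    have B1 : ENNReal.ofReal ((1/4 : ℝ) ^ α * sa ^ α) ≤
        ENNReal.ofReal ((1 - ‖w‖ ^ 2) ^ α) := by
      refine ENNReal.ofReal_le_ofReal ?_
      calc (1/4 : ℝ) ^ α * sa ^ α = (sa / 4) ^ α := by
            rw [show sa / 4 = (1/4) * sa by ring, Real.mul_rpow (by norm_num) hsa.le]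
        _ ≤ (1 - ‖w‖ ^ 2) ^ α := Real.rpow_le_rpow (by positivity) hb1 hα
    have B2 : ENNReal.ofReal k1 * I ≤ Iop α g w := Iop_comp α hα g ha hw
    have B3 : ENNReal.ofReal (k3 * sa ^ (p-2)) ≤
        ENNReal.ofReal ((1 - ‖w‖ ^ 2) ^ (p-2)) := by
      refine ENNReal.ofReal_le_ofReal ?_
      have hmin : min ((sa/4) ^ (p-2)) ((3*sa) ^ (p-2)) ≤ (1 - ‖w‖ ^ 2) ^ (p-2) :=
        rpow_min_le (by positivity) hb1 hb2
      refine le_trans (le_min ?_ ?_) hmin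
      · rw [show sa / 4 = (1/4) * sa by ring, Real.mul_rpow (by norm_num) hsa.le]
        exact mul_le_mul_of_nonneg_right (min_le_left _ _) (Real.rpow_nonneg hsa.le _)
      · rw [Real.mul_rpow (by norm_num) hsa.le]
        exact mul_le_mul_of_nonneg_right (min_le_right _ _) (Real.rpow_nonneg hsa.le _)
    have step : (ENNReal.ofReal ((1/4 : ℝ) ^ α * sa ^ α) * (ENNReal.ofReal k1 * I)) ^ (p/2) *
        ENNReal.ofReal (k3 * sa ^ (p-2)) ≤ Fp p α g w := by
      exact mul_le_mul' (ENNReal.rpow_le_rpow (mul_le_mul' B1 B2) hp2) B3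
    refine le_trans (le_of_eq ?_) step
    rw [hEdef]
    have e1 : ENNReal.ofReal ((1/4 : ℝ) ^ α * sa ^ α) * (ENNReal.ofReal k1 * I)
        = c₆ * (t ^ α * I) := by
      rw [hc6def, ENNReal.ofReal_mul hq4.le, ENNReal.ofReal_mul hq4.le,
        ENNReal.ofReal_rpow_of_pos hsa]
      ring
    have e2 : ENNReal.ofReal (k3 * sa ^ (p-2)) = ENNReal.ofReal k3 * t ^ (p-2) := by
      rw [ENNReal.ofReal_mul hk3.le, ENNReal.ofReal_rpow_of_pos hsa]
    rw [e1, e2, ENNReal.mul_rpow_of_nonneg c₆ (t ^ α * I) hp2]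
    ring
  -- measure of the ball
  have hball : ENNReal.ofReal (1/16 : ℝ) * t ^ (2:ℝ) ≤ mA (Metric.ball a r) := by
    have hπ : ENNReal.ofReal Real.pi = (NNReal.pi : ℝ≥0∞) := by
      rw [← NNReal.coe_real_pi, ENNReal.ofReal_coe_nnreal]
    have hmA : mA (Metric.ball a r) = ENNReal.ofReal r ^ 2 := by
      rw [mA, Measure.smul_apply, smul_eq_mul, Complex.volume_ball, hπ, mul_comm _ (NNReal.pi : ℝ≥0∞),
        ← mul_assoc, ENNReal.inv_mul_cancel, one_mul]
      · exact ENNReal.coe_ne_zero.mpr NNReal.pi_ne_zero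
      · exact ENNReal.coe_ne_top
    rw [hmA]
    have ht2 : t ^ (2:ℝ) = ENNReal.ofReal (sa ^ 2) := by
      rw [htdef, show (2:ℝ) = ((2:ℕ):ℝ) by norm_num, ENNReal.rpow_natCast,
        ENNReal.ofReal_pow hsa.le]
    rw [ht2, ← ENNReal.ofReal_mul (by norm_num), ← ENNReal.ofReal_pow hr.le]
    refine ENNReal.ofReal_le_ofReal ?_
    have h1a : ‖a‖ + 1 ≤ 2 := by linarith
    have hsa2 : sa ≤ 2 * (1 - ‖a‖) := by
      have : sa = (1 - ‖a‖) * (1 + ‖a‖) := by rw [hsadef]; ring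
      nlinarith [norm_nonneg a]
    nlinarith [hsa.le, hr.le]
  -- assemble
  set S : ℝ≥0∞ := XnormE p α g with hSdef
  have hES : E * (ENNReal.ofReal (1/16 : ℝ) * t ^ (2:ℝ)) ≤ S := by
    calc E * (ENNReal.ofReal (1/16 : ℝ) * t ^ (2:ℝ)) ≤ E * mA (Metric.ball a r) :=
          mul_le_mul_right hball E
      _ = ∫⁻ _ in Metric.ball a r, E ∂mA := (setLIntegral_const _ _).symm
      _ ≤ ∫⁻ w in Metric.ball a r, Fp p α g w ∂mA :=
          setLIntegral_mono' measurableSet_ball hpt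
      _ ≤ ∫⁻ w in unitDisk, Fp p α g w ∂mA := lintegral_mono_set (ball_subset_unitDisk ha)
      _ ≤ S := by rw [hSdef, XnormE_eq]; exact le_add_self
  have merge : ∀ x y : ℝ, t ^ x * t ^ y = t ^ (x + y) :=
    fun x y => (ENNReal.rpow_add x y ht0 htT).symm
  have hkey : c₉ * (t ^ (2+α) * I) ^ (p/2) ≤ S := by
    refine le_trans (le_of_eq ?_) hES
    rw [hEdef, hc9def]
    have e3 : (t ^ (2+α) * I) ^ (p/2) = t ^ ((2+α)*(p/2)) * I ^ (p/2) := by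
      rw [ENNReal.mul_rpow_of_nonneg _ _ hp2, ← ENNReal.rpow_mul]
    have e4 : (t ^ α * I) ^ (p/2) = t ^ (α*(p/2)) * I ^ (p/2) := by
      rw [ENNReal.mul_rpow_of_nonneg _ _ hp2, ← ENNReal.rpow_mul]
    have e6' : t ^ ((2+α)*(p/2)) = t ^ (α*(p/2)) * t ^ (p-2) * t ^ (2:ℝ) := by
      rw [merge, merge, show α*(p/2)+(p-2)+(2:ℝ) = (2+α)*(p/2) by ring]
    rw [e3, e4, e6']
    ring
  -- conclude
  set X : ℝ≥0∞ := t ^ (2+α) * I with hXdef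
  have h2 : X ^ (p/2) ≤ c₉⁻¹ * S := (ENNReal.mul_le_iff_le_inv hc90 hc9T).mp hkey
  have h3 : X = (X ^ (p/2)) ^ (2/p) := by
    rw [← ENNReal.rpow_mul, show (p/2)*(2/p) = 1 by field_simp, ENNReal.rpow_one]
  have h4 : X ≤ (c₉⁻¹) ^ (2/p) * S ^ (2/p) := by
    rw [h3, ← ENNReal.mul_rpow_of_nonneg _ _ (by positivity : (0:ℝ) ≤ 2/p)]
    exact ENNReal.rpow_le_rpow h2 (by positivity)
  have h5 : ENNReal.ofReal ((1 - ‖a‖ ^ 2) ^ (2 + α)) * Iop α g a = X := by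
    rw [hXdef, htdef, hIdef, ENNReal.ofReal_rpow_of_pos hsa]
  rw [h5]
  exact h4

lemma Fsplit (A J : ℝ≥0∞) (hA0 : A ≠ 0) (hAT : A ≠ ⊤) (α p q : ℝ) (hp : 0 ≤ p) (hpq : p ≤ q) :
    (A ^ α * J) ^ (q/2) * A ^ (q-2) =
      ((A ^ α * J) ^ (p/2) * A ^ (p-2)) * ((A ^ (2+α) * J) ^ ((q-p)/2)) := by
  have h2 : (0:ℝ) ≤ q/2 := by linarith
  have h3 : (0:ℝ) ≤ (q-p)/2 := by linarith
  have hp2 : (0:ℝ) ≤ p/2 := by linarith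
  have merge : ∀ x y : ℝ, A ^ x * A ^ y = A ^ (x + y) :=
    fun x y => (ENNReal.rpow_add x y hA0 hAT).symm
  rw [ENNReal.mul_rpow_of_nonneg _ _ h2, ENNReal.mul_rpow_of_nonneg _ _ hp2,
    ENNReal.mul_rpow_of_nonneg _ _ h3, ← ENNReal.rpow_mul, ← ENNReal.rpow_mul,
    ← ENNReal.rpow_mul]
  have hJ : J ^ (q/2) = J ^ (p/2) * J ^ ((q-p)/2) := by
    rw [← ENNReal.rpow_add_of_nonneg (p/2) ((q-p)/2) hp2 h3,
      show p/2 + (q-p)/2 = q/2 by ring]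
  rw [hJ]
  calc A ^ (α*(q/2)) * (J ^ (p/2) * J ^ ((q-p)/2)) * A ^ (q-2)
      = (A ^ (α*(q/2)) * A ^ (q-2)) * (J ^ (p/2) * J ^ ((q-p)/2)) := by ring
    _ = A ^ (α*(q/2) + (q-2)) * (J ^ (p/2) * J ^ ((q-p)/2)) := by rw [merge]
    _ = A ^ ((α*(p/2) + (p-2)) + (2+α)*((q-p)/2)) * (J ^ (p/2) * J ^ ((q-p)/2)) := by
        rw [show α*(q/2) + (q-2) = (α*(p/2) + (p-2)) + (2+α)*((q-p)/2) by ring]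
    _ = (A ^ (α*(p/2)) * A ^ (p-2)) * A ^ ((2+α)*((q-p)/2)) *
          (J ^ (p/2) * J ^ ((q-p)/2)) := by rw [merge, merge]
    _ = A ^ (α*(p/2)) * J ^ (p/2) * A ^ (p-2) * (A ^ ((2+α)*((q-p)/2)) * J ^ ((q-p)/2)) := by
        ring

/-- Let `α ≥ 0` and `1 < p < q < ∞`. Then `X^p_α ⊆ X^q_α`, with
`‖g‖_{X^q_α}^q ≤ C (‖g‖_{X^p_α}^p)^{q/p}`; in particular every `g ∈ X^p_α` satisfies
`sup_{a∈𝔻} (1-|a|²)^{2+α} ∫_𝔻 |g'(z)|² dA_α(z)/|1-conj(a)z|^{2+2α} ≤ C ‖g‖_{X^p_α}²`. -/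
theorem stmt11 (α p q : ℝ) (hα : 0 ≤ α) (hp : 1 < p) (hpq : p < q) :
    ∃ C : ℝ≥0∞, C ≠ ⊤ ∧ ∀ g : ℂ → ℂ, DifferentiableOn ℂ g unitDisk →
      XnormE q α g ≤ C * (XnormE p α g) ^ (q / p) ∧
      ∀ a ∈ unitDisk,
        ENNReal.ofReal ((1 - ‖a‖ ^ 2) ^ (2 + α)) *
          ∫⁻ z in unitDisk,
            ENNReal.ofReal (‖deriv g z‖ ^ 2 * ((α + 1) * (1 - ‖z‖ ^ 2) ^ α) /
              ‖1 - (starRingEnd ℂ) a * z‖ ^ (2 + 2 * α)) ∂mA ≤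
        C * (XnormE p α g) ^ (2 / p) := by
  obtain ⟨C₀, hC00, hC0T, hbd⟩ := supBound α p hα hp
  have hp0 : p ≠ 0 := by linarith
  have hqp : (0:ℝ) ≤ (q-p)/2 := by linarith
  have hqpp : (0:ℝ) ≤ (q-p)/p := div_nonneg (by linarith) (by linarith)
  refine ⟨1 + C₀ + C₀ ^ ((q-p)/2), ?_, ?_⟩
  · refine ENNReal.add_ne_top.mpr ⟨ENNReal.add_ne_top.mpr ⟨one_ne_top, hC0T⟩, ?_⟩
    exact ENNReal.rpow_ne_top_of_nonneg hqp hC0T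
  intro g _
  set C : ℝ≥0∞ := 1 + C₀ + C₀ ^ ((q-p)/2) with hCdef
  have hC0 : C ≠ 0 := by
    simp only [hCdef]
    intro h
    rw [add_eq_zero, add_eq_zero] at h
    exact one_ne_zero h.1.1
  have hC0le : C₀ ≤ C := le_add_of_le_of_nonneg (le_add_self) zero_le
  have hC1le : 1 + C₀ ^ ((q-p)/2) ≤ C := by
    rw [hCdef, add_assoc, add_comm C₀ _, ← add_assoc]
    exact le_add_of_le_of_nonneg le_rfl zero_le
  set S : ℝ≥0∞ := XnormE p α g with hSdef
  have hqppos : (0:ℝ) < q / p := div_pos (by linarith) (by linarith)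
  have h2ppos : (0:ℝ) < 2 / p := div_pos (by norm_num) (by linarith)
  by_cases hS : S = ⊤
  · constructor
    · rw [hS, ENNReal.top_rpow_of_pos hqppos, ENNReal.mul_top hC0]
      exact le_top
    · intro a ha
      rw [hS, ENNReal.top_rpow_of_pos h2ppos, ENNReal.mul_top hC0]
      exact le_top
  constructor
  · -- the main embedding inequality
    have part1 : ENNReal.ofReal (‖g 0‖ ^ q) ≤ S ^ (q/p) := by
      have e : ‖g 0‖ ^ q = (‖g 0‖ ^ p) ^ (q/p) := by
        rw [← Real.rpow_mul (norm_nonneg _), show p * (q/p) = q by field_simp]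
      rw [e, ← ENNReal.ofReal_rpow_of_nonneg (Real.rpow_nonneg (norm_nonneg _) p)
        (by positivity : (0:ℝ) ≤ q/p)]
      refine ENNReal.rpow_le_rpow ?_ (by positivity)
      rw [hSdef, XnormE_eq]; exact le_self_add
    set D : ℝ≥0∞ := C₀ ^ ((q-p)/2) * S ^ ((q-p)/p) with hDdef
    have hDT : D ≠ ⊤ :=
      ENNReal.mul_ne_top (ENNReal.rpow_ne_top_of_nonneg hqp hC0T)
        (ENNReal.rpow_ne_top_of_nonneg hqpp hS)
    have hptw : ∀ w ∈ unitDisk, Fp q α g w ≤ Fp p α g w * D := by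
      intro w hw
      have hw1 : ‖w‖ < 1 := mem_unitDisk.mp hw
      have hsw : (0:ℝ) < 1 - ‖w‖ ^ 2 := by nlinarith [norm_nonneg w]
      set A : ℝ≥0∞ := ENNReal.ofReal (1 - ‖w‖ ^ 2) with hAdef
      have hA0 : A ≠ 0 := (ENNReal.ofReal_pos.mpr hsw).ne'
      have hAT : A ≠ ⊤ := ofReal_ne_top
      have hsplit : Fp q α g w = Fp p α g w * ((A ^ (2+α) * Iop α g w) ^ ((q-p)/2)) := by
        rw [Fp, Fp, ← ENNReal.ofReal_rpow_of_pos hsw, ← ENNReal.ofReal_rpow_of_pos hsw,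
          ← ENNReal.ofReal_rpow_of_pos hsw]
        exact Fsplit A (Iop α g w) hA0 hAT α p q (by linarith) hpq.le
      rw [hsplit]
      refine mul_le_mul_right ?_ _
      have hb := hbd g w hw
      rw [← ENNReal.ofReal_rpow_of_pos hsw] at hb
      calc (A ^ (2+α) * Iop α g w) ^ ((q-p)/2)
          ≤ (C₀ * S ^ (2/p)) ^ ((q-p)/2) := ENNReal.rpow_le_rpow hb hqp
        _ = D := by
            rw [ENNReal.mul_rpow_of_nonneg _ _ hqp, ← ENNReal.rpow_mul,
              show (2/p) * ((q-p)/2) = (q-p)/p by ring]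
    have part2 : (∫⁻ w in unitDisk, Fp q α g w ∂mA) ≤ C₀ ^ ((q-p)/2) * S ^ (q/p) := by
      calc (∫⁻ w in unitDisk, Fp q α g w ∂mA)
          ≤ ∫⁻ w in unitDisk, Fp p α g w * D ∂mA :=
            setLIntegral_mono' measurableSet_ball hptw
        _ = (∫⁻ w in unitDisk, Fp p α g w ∂mA) * D := lintegral_mul_const' D _ hDT
        _ ≤ S * D := by
            refine mul_le_mul_left ?_ D
            rw [hSdef, XnormE_eq]; exact le_add_self
        _ = C₀ ^ ((q-p)/2) * (S ^ (1:ℝ) * S ^ ((q-p)/p)) := by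
            rw [hDdef, ENNReal.rpow_one]; ring
        _ = C₀ ^ ((q-p)/2) * S ^ (q/p) := by
            rw [← ENNReal.rpow_add_of_nonneg 1 ((q-p)/p) zero_le_one hqpp,
              show (1:ℝ) + (q-p)/p = q/p by field_simp; ring]
    calc XnormE q α g = ENNReal.ofReal (‖g 0‖ ^ q) + ∫⁻ w in unitDisk, Fp q α g w ∂mA :=
          XnormE_eq q α g
      _ ≤ S ^ (q/p) + C₀ ^ ((q-p)/2) * S ^ (q/p) := add_le_add part1 part2
      _ = (1 + C₀ ^ ((q-p)/2)) * S ^ (q/p) := by ring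
      _ ≤ C * S ^ (q/p) := mul_le_mul_left hC1le _
  · intro a ha
    exact (hbd g a ha).trans (mul_le_mul_left hC0le _)
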